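/- Let G1 be a torsion group, G2 a group, and φ : G1 → G2 a bijection such that a multiset over G1 is a product-one sequence over G1 if and only if its termwise image under φ is a product-one sequence over G2. Then there do not exist three elements g1, g2, g3 in G1 satisfying simultaneously: (i) φ(g1 g2) = φ(g1) φ(g2) and φ(g1 g3) = φ(g3) φ(g1); (ii) g1 g2 ≠ g2 g1 and g1 g3 ≠ g3 g1; (iii) g2 g3 = g3 g2. -/
import Mathlib

set_option linter.unusedSectionVars false

/-- A multiset `S` over a group `G` is a *product-one sequence* if its terms can be
ordered so that their product is `1`. -/
def IsProductOne {G : Type*} [Group G] (S : Multiset G) : Prop :=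
  ∃ l : List G, (l : Multiset G) = S ∧ l.prod = 1

/-- The monoid `B(G)` of product-one sequences over `G`, as a submonoid of the free
abelian monoid (finite multisets under addition) over `G`. -/
def ProductOneSubmonoid (G : Type*) [Group G] : AddSubmonoid (Multiset G) where
  carrier := {S | IsProductOne S}
  zero_mem' := ⟨[], rfl, rfl⟩
  add_mem' := by
    rintro a b ⟨l1, rfl, p1⟩ ⟨l2, rfl, p2⟩
    exact ⟨l1 ++ l2, by simp, by simp [p1, p2]⟩

section Helpers

variable {G : Type*} [Group G]

private lemma cyc {x y : G} (hxy : x * y = 1) : y * x = 1 := by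
  rw [mul_eq_one_iff_eq_inv] at hxy
  subst hxy
  simp

private lemma ipo_pair {p q : G} (hp : IsProductOne ({p, q} : Multiset G)) : p * q = 1 := by
  obtain ⟨l, hl, hprod⟩ := hp
  have hperm : l.Perm [p, q] := by
    rw [show ({p, q} : Multiset G) = (([p, q] : List G) : Multiset G) from rfl] at hl
    exact Multiset.coe_eq_coe.mp hl
  have hmem := List.mem_permutations'.mpr hperm
  simp [List.permutations', List.permutations'Aux] at hmem
  rcases hmem with rfl | rfl
  · simpa [mul_assoc] using hprod
  · have : q * p = 1 := by simpa [mul_assoc] using hprod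
    exact cyc this

private lemma ipo_triple {p q r : G} (hp : IsProductOne ({p, q, r} : Multiset G)) :
    p * (q * r) = 1 ∨ p * (r * q) = 1 := by
  obtain ⟨l, hl, hprod⟩ := hp
  have hperm : l.Perm [p, q, r] := by
    rw [show ({p, q, r} : Multiset G) = (([p, q, r] : List G) : Multiset G) from rfl] at hl
    exact Multiset.coe_eq_coe.mp hl
  have hmem := List.mem_permutations'.mpr hperm
  have hcases : l = [p,q,r] ∨ l = [q,p,r] ∨ l = [q,r,p] ∨ l = [p,r,q] ∨ l = [r,p,q] ∨
      l = [r,q,p] := by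
    simp [List.permutations', List.permutations'Aux] at hmem
    tauto
  rcases hcases with rfl | rfl | rfl | rfl | rfl | rfl
  · left; simpa [mul_assoc] using hprod
  · right
    have h1 : q * (p * r) = 1 := by simpa [mul_assoc] using hprod
    have h2 : (p * r) * q = 1 := cyc h1
    simpa [mul_assoc] using h2
  · left
    have h1 : (q * r) * p = 1 := by simpa [mul_assoc] using hprod
    exact cyc h1
  · right; simpa [mul_assoc] using hprod
  · left
    have h1 : r * (p * q) = 1 := by simpa [mul_assoc] using hprod
    have h2 : (p * q) * r = 1 := cyc h1
    simpa [mul_assoc] using h2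
  · right
    have h1 : (r * q) * p = 1 := by simpa [mul_assoc] using hprod
    exact cyc h1

end Helpers

section Phi

variable {G1 G2 : Type*} [Group G1] [Group G2]

private lemma map_pair (φ : G1 → G2) (x y : G1) :
    (({x, y} : Multiset G1)).map φ = ({φ x, φ y} : Multiset G2) := by simp

private lemma map_triple (φ : G1 → G2) (x y z : G1) :
    (({x, y, z} : Multiset G1)).map φ = ({φ x, φ y, φ z} : Multiset G2) := by simp

private lemma phi_inv (φ : G1 → G2)
    (h : ∀ S : Multiset G1, IsProductOne S ↔ IsProductOne (S.map φ)) (x : G1) :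
    φ x⁻¹ = (φ x)⁻¹ := by
  have h1 : IsProductOne ({x, x⁻¹} : Multiset G1) := ⟨[x, x⁻¹], rfl, by simp⟩
  have h2 := (h _).mp h1
  rw [map_pair] at h2
  exact eq_inv_of_mul_eq_one_right (ipo_pair h2)

/-- primal relation: `φ (x*y)` is `φ x * φ y` or `φ y * φ x`. -/
private lemma primal (φ : G1 → G2)
    (h : ∀ S : Multiset G1, IsProductOne S ↔ IsProductOne (S.map φ)) (x y : G1) :
    φ (x * y) = φ x * φ y ∨ φ (x * y) = φ y * φ x := by
  have h1 : IsProductOne ({x, y, (x * y)⁻¹} : Multiset G1) :=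
    ⟨[x, y, (x * y)⁻¹], rfl, by simp⟩
  have h2 := (h _).mp h1
  rw [map_triple, phi_inv φ h] at h2
  rcases ipo_triple h2 with H | H
  · left
    rw [← mul_assoc, mul_inv_eq_one] at H
    exact H.symm
  · right
    have H2 := cyc H
    rw [mul_assoc, inv_mul_eq_one] at H2
    exact H2
/-- dual relation: a preimage of `φ x * φ y` is `x*y` or `y*x`. -/
private lemma dual (φ : G1 → G2)
    (h : ∀ S : Multiset G1, IsProductOne S ↔ IsProductOne (S.map φ)) (x y z : G1)
    (hz : φ z = φ x * φ y) : z = x * y ∨ z = y * x := by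
  have himg : IsProductOne (({x, y, z⁻¹} : Multiset G1).map φ) := by
    rw [map_triple, phi_inv φ h]
    exact ⟨[φ x, φ y, (φ z)⁻¹], rfl, by rw [hz]; simp⟩
  have h1 := (h _).mpr himg
  rcases ipo_triple h1 with H | H
  · left
    rw [← mul_assoc, mul_inv_eq_one] at H
    exact H.symm
  · right
    have H2 := cyc H
    rw [mul_assoc, inv_mul_eq_one] at H2
    exact H2

private lemma orient (φ : G1 → G2) (hbij : Function.Bijective φ)
    (h : ∀ S : Multiset G1, IsProductOne S ↔ IsProductOne (S.map φ)) {x y : G1}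
    (hxy : φ (x * y) = φ x * φ y) (hne : x * y ≠ y * x) : φ (y * x) = φ y * φ x := by
  rcases primal φ h y x with H | H
  · exact H
  · exact absurd (hbij.1 (H.trans hxy.symm)) fun e => hne e.symm

private lemma orient' (φ : G1 → G2) (hbij : Function.Bijective φ)
    (h : ∀ S : Multiset G1, IsProductOne S ↔ IsProductOne (S.map φ)) {x y : G1}
    (hxy : φ (x * y) = φ y * φ x) (hne : x * y ≠ y * x) : φ (y * x) = φ x * φ y := by
  rcases primal φ h y x with H | H
  · exact absurd (hbij.1 (H.trans hxy.symm)) fun e => hne e.symm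
  · exact H

/-- The key case: `φ (g2*g3) = φ g2 * φ g3`. -/
private lemma key (φ : G1 → G2) (hbij : Function.Bijective φ)
    (h : ∀ S : Multiset G1, IsProductOne S ↔ IsProductOne (S.map φ)) (g1 g2 g3 : G1)
    (h12 : φ (g1 * g2) = φ g1 * φ g2) (h13 : φ (g1 * g3) = φ g3 * φ g1)
    (n2 : g1 * g2 ≠ g2 * g1) (n3 : g1 * g3 ≠ g3 * g1) (hc : g2 * g3 = g3 * g2)
    (hd : φ (g2 * g3) = φ g2 * φ g3) : False := by
  obtain ⟨inj, surj⟩ := hbij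
  have E3 : φ (g2 * g1) = φ g2 * φ g1 := orient φ ⟨inj, surj⟩ h h12 n2
  have E4 : φ (g3 * g1) = φ g1 * φ g3 := orient' φ ⟨inj, surj⟩ h h13 n3
  have E1 : φ g1 * φ g2 ≠ φ g2 * φ g1 := fun e => n2 (inj (h12.trans (e.trans E3.symm)))
  have E2 : φ g1 * φ g3 ≠ φ g3 * φ g1 := fun e => n3 (inj (h13.trans (e.symm.trans E4.symm)))
  -- Step A : φ (g1*(g2*g3)) = φ g1 * φ g2 * φ g3
  obtain ⟨z, hz⟩ := surj (φ g1 * φ g2 * φ g3)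
  have hzu : z = g1 * (g2 * g3) := by
    have d1 := dual φ h g1 (g2 * g3) z (by rw [hz, hd, mul_assoc])
    have d2 := dual φ h (g1 * g2) g3 z (by rw [hz, h12])
    rcases d1 with e1 | e1
    · exact e1
    rcases d2 with e2 | e2
    · rw [e2, mul_assoc]
    · exfalso
      have e3 : g3 * (g2 * g1) = g3 * (g1 * g2) := by
        have := e1.symm.trans e2
        rw [hc] at this
        simpa [mul_assoc] using this
      exact n2 (mul_left_cancel e3).symm
  have hu : φ (g1 * (g2 * g3)) = φ g1 * φ g2 * φ g3 := by rw [← hzu, hz]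
  -- Step B : φ g1 * φ g2 * φ g3 = φ g2 * φ g3 * φ g1
  have hB : φ g1 * φ g2 * φ g3 = φ g2 * φ g3 * φ g1 := by
    obtain ⟨z', hz'⟩ := surj (φ g2 * φ g3 * φ g1)
    have d1 := dual φ h (g2 * g3) g1 z' (by rw [hz', hd])
    have d2 := dual φ h g2 (g1 * g3) z' (by rw [hz', h13, mul_assoc])
    have key' : z' = g1 * (g2 * g3) → φ g1 * φ g2 * φ g3 = φ g2 * φ g3 * φ g1 := by
      rintro rfl
      rw [← hu, hz']
    rcases d1 with e1 | e1
    · rcases d2 with e2 | e2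
      · exfalso
        have e3 : g2 * (g3 * g1) = g2 * (g1 * g3) := by
          have := e1.symm.trans e2
          simpa [mul_assoc] using this
        exact n3 (mul_left_cancel e3).symm
      · exact key' (by rw [e2, mul_assoc, ← hc])
    · exact key' e1
  -- Step D : φ g3 * φ g1 * φ g2 = φ g2 * φ g1 * φ g3
  have F3 : φ g3 * φ g1 * φ g2 = φ g2 * φ g1 * φ g3 := by
    have hw1 := primal φ h g2 (g1 * g3)
    rw [h13] at hw1
    have hw2 := primal φ h (g2 * g1) g3
    rw [E3] at hw2
    have hwe : (g2 * g1) * g3 = g2 * (g1 * g3) := mul_assoc _ _ _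
    rw [hwe] at hw2
    have hwne : φ (g2 * (g1 * g3)) ≠ φ g1 * φ g2 * φ g3 := by
      rw [← hu]
      intro e
      have : g2 * (g1 * g3) = g1 * (g2 * g3) := inj e
      have : (g2 * g1) * g3 = (g1 * g2) * g3 := by simpa [mul_assoc] using this
      exact n2 (mul_right_cancel this).symm
    have hw : φ (g2 * (g1 * g3)) = φ g3 * φ g1 * φ g2 := by
      rcases hw1 with H | H
      · exfalso
        apply hwne
        rw [H, hB]
        try simp [mul_assoc]
      · rw [H]
        try simp [mul_assoc]
    rcases hw2 with H | H
    · rw [← hw, H]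
      try simp [mul_assoc]
    · exfalso
      rw [hw] at H
      have : φ g3 * (φ g1 * φ g2) = φ g3 * (φ g2 * φ g1) := by simpa [mul_assoc] using H
      exact E1 (mul_left_cancel this)
  -- Step E : consider m = (g1*(g2*g3))*g1 = (g1*g2)*(g3*g1)
  have hm1 := primal φ h (g1 * (g2 * g3)) g1
  rw [hu] at hm1
  have hm2 := primal φ h (g1 * g2) (g3 * g1)
  rw [h12, E4] at hm2
  have hme : (g1 * g2) * (g3 * g1) = (g1 * (g2 * g3)) * g1 := by simp [mul_assoc]
  rw [hme] at hm2
  -- derive φ g1 * φ g2 * φ g3 = φ g3 * φ g1 * φ g2  (i.e. abc = cab), or direct contradiction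
  have F4 : φ g1 * φ g2 * φ g3 = φ g3 * φ g1 * φ g2 := by
    rcases hm1 with H1 | H1 <;> rcases hm2 with H2 | H2
    · -- (abc)*a = (ab)*(ac) : forces c*a = a*c, contradiction
      exfalso
      have e : φ g1 * (φ g2 * (φ g3 * φ g1)) = φ g1 * (φ g2 * (φ g1 * φ g3)) := by
        have := H1.symm.trans H2
        simpa [mul_assoc] using this
      exact E2 (mul_left_cancel (mul_left_cancel e)).symm
    · -- (abc)*a = (ac)*(ab) : forces bca = cab, then use hB
      have e : φ g1 * (φ g2 * (φ g3 * φ g1)) = φ g1 * (φ g3 * (φ g1 * φ g2)) := by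
        have := H1.symm.trans H2
        simpa [mul_assoc] using this
      have e2 : φ g2 * (φ g3 * φ g1) = φ g3 * (φ g1 * φ g2) := mul_left_cancel e
      rw [hB]
      simpa [mul_assoc] using e2
    · -- a*(abc) = (ab)*(ac) : forces abc = bac, i.e. ab = ba, contradiction
      exfalso
      have e : φ g1 * (φ g1 * (φ g2 * φ g3)) = φ g1 * (φ g2 * (φ g1 * φ g3)) := by
        have := H1.symm.trans H2
        simpa [mul_assoc] using this
      have e2 : (φ g1 * φ g2) * φ g3 = (φ g2 * φ g1) * φ g3 := by
        have := mul_left_cancel e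
        simpa [mul_assoc] using this
      exact E1 (mul_right_cancel e2)
    · -- a*(abc) = (ac)*(ab) : forces abc = cab
      have e : φ g1 * (φ g1 * (φ g2 * φ g3)) = φ g1 * (φ g3 * (φ g1 * φ g2)) := by
        have := H1.symm.trans H2
        simpa [mul_assoc] using this
      have e2 := mul_left_cancel e
      simpa [mul_assoc] using e2
  -- F4 with F3 : abc = cab = bac hence ab = ba, contradiction
  have e : (φ g1 * φ g2) * φ g3 = (φ g2 * φ g1) * φ g3 := by
    have := F4.trans F3
    simpa [mul_assoc] using this
  exact E1 (mul_right_cancel e)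

end Phi

private lemma ipo_op {G : Type*} [Group G] (S : Multiset G) :
    IsProductOne S ↔ IsProductOne (S.map MulOpposite.op) := by
  constructor
  · rintro ⟨l, rfl, hp⟩
    refine ⟨(l.map MulOpposite.op).reverse, ?_, ?_⟩
    · rw [Multiset.coe_reverse]
      simp
    · rw [← MulOpposite.op_list_prod, hp, MulOpposite.op_one]
  · rintro ⟨l, hl, hp⟩
    refine ⟨(l.map MulOpposite.unop).reverse, ?_, ?_⟩
    · rw [Multiset.coe_reverse]
      have : ((l.map MulOpposite.unop : List G) : Multiset G) =
          (S.map MulOpposite.op).map MulOpposite.unop := by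
        rw [← hl]; simp
      rw [this, Multiset.map_map]
      simp
    · rw [← MulOpposite.unop_list_prod, hp, MulOpposite.unop_one]

theorem A5 (G1 G2 : Type*) [Group G1] [Group G2]
    (htor : ∀ g : G1, IsOfFinOrder g) (φ : G1 → G2) (hbij : Function.Bijective φ)
    (h : ∀ S : Multiset G1, IsProductOne S ↔ IsProductOne (S.map φ)) :
    ¬∃ g1 g2 g3 : G1,
        (φ (g1 * g2) = φ g1 * φ g2 ∧ φ (g1 * g3) = φ g3 * φ g1) ∧
        (g1 * g2 ≠ g2 * g1 ∧ g1 * g3 ≠ g3 * g1) ∧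
        g2 * g3 = g3 * g2 := by
  rintro ⟨g1, g2, g3, ⟨h12, h13⟩, ⟨n2, n3⟩, hc⟩
  rcases primal φ h g2 g3 with hd | hd
  · exact key φ hbij h g1 g2 g3 h12 h13 n2 n3 hc hd
  · -- pass to the opposite groups
    set φ' : G1ᵐᵒᵖ → G2ᵐᵒᵖ := fun x => MulOpposite.op (φ x.unop) with hφ'
    have hbij' : Function.Bijective φ' :=
      (MulOpposite.opEquiv.bijective.comp hbij).comp MulOpposite.opEquiv.symm.bijective
    have h' : ∀ S : Multiset G1ᵐᵒᵖ, IsProductOne S ↔ IsProductOne (S.map φ') := by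
      intro S
      have e1 : (S.map MulOpposite.unop).map MulOpposite.op = S := by
        rw [Multiset.map_map]; simp
      have e2 : ((S.map MulOpposite.unop).map φ).map MulOpposite.op = S.map φ' := by
        rw [Multiset.map_map, Multiset.map_map]
        rfl
      have i1 : IsProductOne S ↔ IsProductOne (Multiset.map MulOpposite.unop S) := by
        conv_lhs => rw [← e1]
        exact (ipo_op _).symm
      have i2 : IsProductOne (Multiset.map φ' S) ↔
          IsProductOne (Multiset.map φ (Multiset.map MulOpposite.unop S)) := by
        rw [← e2]
        exact (ipo_op _).symm
      rw [i1, i2]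
      exact h _
    have E3 : φ (g2 * g1) = φ g2 * φ g1 := orient φ hbij h h12 n2
    have E4 : φ (g3 * g1) = φ g1 * φ g3 := orient' φ hbij h h13 n3
    refine key φ' hbij' h' (MulOpposite.op g1) (MulOpposite.op g2) (MulOpposite.op g3)
      ?_ ?_ ?_ ?_ ?_ ?_
    · show MulOpposite.op (φ (g2 * g1)) = MulOpposite.op (φ g2 * φ g1)
      rw [E3]
    · show MulOpposite.op (φ (g3 * g1)) = MulOpposite.op (φ g1 * φ g3)
      rw [E4]
    · intro e
      exact n2 (MulOpposite.op_injective e).symm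
    · intro e
      exact n3 (MulOpposite.op_injective e).symm
    · show MulOpposite.op (g3 * g2) = MulOpposite.op (g2 * g3)
      rw [hc]
    · show MulOpposite.op (φ (g3 * g2)) = MulOpposite.op (φ g3 * φ g2)
      rw [← hc, hd]
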